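/- Suppose there exists a superspecial curve C of genus g over an algebraically closed field k of characteristic p with g > (p² + 1)/(2p). Then there exists a maximal curve X of genus g over F_{p²} (i.e., a curve with exactly p² + 1 + 2gp rational points over F_{p²}) such that X ×_{F_{p²}} k is isomorphic to C. -/
import Mathlib


/-- Suppose there exists a superspecial curve `C` of genus `g` over an
algebraically closed field `k` of characteristic `p` with `g > (p² + 1)/(2p)`.  Then
there exists a maximal curve `X` of genus `g` over `F_{p²}` (i.e. a curve with exactly
`p² + 1 + 2gp` rational points over `F_{p²}`) such that `X ×_{F_{p²}} k ≅ C`.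

The theorem is stated abstractly over a type `Curve_k` of (genus-`g`) curves over `k`
and a type `Curve_Fp2` of (genus-`g`) curves over `F_{p²}`, with `count X` the number
of `F_{p²}`-rational points of `X`, `baseChange X = X ×_{F_{p²}} k`, and `IsoOver_k`
isomorphism of curves over `k`.  Ekedahl's descent result — every superspecial curve
over `k` descends to a curve `X` over `F_{p²}` with `#X(F_{p²}) = p² + 1 ± 2gp` — is
taken as a hypothesis. -/
theorem superspecial_implies_maximal_curve
    (p g : ℕ) (hp : p.Prime) (hg0 : 0 < g)
    (Curve_k Curve_Fp2 : Type*)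
    (count : Curve_Fp2 → ℕ)
    (baseChange : Curve_Fp2 → Curve_k)
    (IsoOver_k : Curve_k → Curve_k → Prop)
    (IsSuperspecial : Curve_k → Prop)
    (C : Curve_k) (hss : IsSuperspecial C)
    -- Ekedahl's descent (proof of [Ekedahl], Theorem 1.1):
    (hdescent : ∃ X : Curve_Fp2, IsoOver_k (baseChange X) C ∧
        ((count X : ℤ) = p ^ 2 + 1 + 2 * g * p ∨
          (count X : ℤ) = (p : ℤ) ^ 2 + 1 - 2 * g * p))
    -- the genus bound `g > (p² + 1)/(2p)`:
    (hbound : ((p : ℚ) ^ 2 + 1) / (2 * p) < g) :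
    ∃ X : Curve_Fp2, count X = p ^ 2 + 1 + 2 * g * p ∧
      IsoOver_k (baseChange X) C := by
  obtain ⟨X, hiso, hcase | hcase⟩ := hdescent
  · exact ⟨X, by exact_mod_cast hcase, hiso⟩
  · exfalso
    have hp0 : (0:ℚ) < p := by exact_mod_cast hp.pos
    have h2 : ((p:ℚ)^2 + 1) < 2 * g * p := by
      have := (div_lt_iff₀ (by positivity : (0:ℚ) < 2 * p)).mp hbound
      linarith
    have h3 : ((p:ℤ)^2 + 1) < 2 * g * p := by exact_mod_cast h2
    have h4 : (0:ℤ) ≤ (count X : ℤ) := Int.ofNat_nonneg _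
    omega
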